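/- Let M be an abelian locally finite module category over P with the Chevalley property. Then for every object S of M and every simple object T of M, there are only finitely many isomorphism classes of simple objects A in P such that ℓ_T(A⊗S) > 0 (i.e. such that T occurs as a composition factor of A⊗S). -/

import Mathlib

open CategoryTheory MonoidalCategory Limits

universe v u u₂ u₃ w

namespace Tannaka

/-- A module category over a monoidal category `P`: a category `M` with an action
bifunctor `⊗ : P × M → M`, together with associativity and unit constraints satisfying the
pentagon and triangle axioms (Definition 2.3 of the paper). -/
structure ModuleCategoryStruct (P : Type u) [Category.{v} P] [MonoidalCategory P]
    (M : Type u₂) [Category.{w} M] where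
  act : P ⥤ M ⥤ M
  assocIso : ∀ X Y : P, act.obj (X ⊗ Y) ≅ act.obj Y ⋙ act.obj X
  unitIso : act.obj (𝟙_ P) ≅ 𝟭 M
  assoc_natural :
    ∀ {X X' Y Y' : P} (f : X ⟶ X') (g : Y ⟶ Y') (m : M),
      (act.map (f ⊗ₘ g)).app m ≫ (assocIso X' Y').hom.app m =
        (assocIso X Y).hom.app m ≫ (act.obj X).map ((act.map g).app m) ≫
          (act.map f).app ((act.obj Y').obj m)
  pentagon :
    ∀ (X Y Z : P) (m : M),
      (assocIso (X ⊗ Y) Z).hom.app m ≫ (assocIso X Y).hom.app ((act.obj Z).obj m) =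
        (act.map (α_ X Y Z).hom).app m ≫ (assocIso X (Y ⊗ Z)).hom.app m ≫
          (act.obj X).map ((assocIso Y Z).hom.app m)
  triangle :
    ∀ (X : P) (m : M),
      (assocIso X (𝟙_ P)).hom.app m ≫ (act.obj X).map (unitIso.hom.app m) =
        (act.map (ρ_ X).hom).app m

variable {P : Type u} [Category.{v} P] [MonoidalCategory P]

/-- The action of `X : P` on an object `m` of a `P`-module category, `X ⊗ m`. -/
abbrev ModuleCategoryStruct.actObj {M : Type u₂} [Category.{w} M]
    (aM : ModuleCategoryStruct P M) (X : P) (m : M) : M :=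
  (aM.act.obj X).obj m

/-- A `P`-module functor: a functor together with coherent isomorphisms
`F(X ⊗ m) ≅ X ⊗ F(m)` (Definition 2.5 of the paper). -/
structure ModuleFunctor {M : Type u₂} [Category.{w} M] {N : Type u₃} [Category.{v} N]
    (aM : ModuleCategoryStruct P M) (aN : ModuleCategoryStruct P N) where
  F : M ⥤ N
  c : ∀ X : P, aM.act.obj X ⋙ F ≅ F ⋙ aN.act.obj X
  c_natural : ∀ {X Y : P} (f : X ⟶ Y) (m : M),
      F.map ((aM.act.map f).app m) ≫ (c Y).hom.app m =
        (c X).hom.app m ≫ (aN.act.map f).app (F.obj m)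
  c_tensor : ∀ (X Y : P) (m : M),
      F.map ((aM.assocIso X Y).hom.app m) ≫ (c X).hom.app ((aM.act.obj Y).obj m) ≫
          (aN.act.obj X).map ((c Y).hom.app m) =
        (c (X ⊗ Y)).hom.app m ≫ (aN.assocIso X Y).hom.app (F.obj m)
  c_unit : ∀ m : M, (c (𝟙_ P)).hom.app m ≫ aN.unitIso.hom.app (F.obj m) =
        F.map (aM.unitIso.hom.app m)

/-- A morphism of `P`-module functors. -/
structure ModuleNatTrans {M : Type u₂} [Category.{w} M] {N : Type u₃} [Category.{v} N]
    {aM : ModuleCategoryStruct P M} {aN : ModuleCategoryStruct P N}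
    (F G : ModuleFunctor aM aN) where
  app : F.F ⟶ G.F
  compat : ∀ (X : P) (m : M),
      (F.c X).hom.app m ≫ (aN.act.obj X).map (app.app m) =
        app.app ((aM.act.obj X).obj m) ≫ (G.c X).hom.app m

/-- An isomorphism of `P`-module functors. -/
structure ModuleNatIso {M : Type u₂} [Category.{w} M] {N : Type u₃} [Category.{v} N]
    {aM : ModuleCategoryStruct P M} {aN : ModuleCategoryStruct P N}
    (F G : ModuleFunctor aM aN) where
  iso : F.F ≅ G.F
  compat : ∀ (X : P) (m : M),
      (F.c X).hom.app m ≫ (aN.act.obj X).map (iso.hom.app m) =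
        iso.hom.app ((aM.act.obj X).obj m) ≫ (G.c X).hom.app m

/-- An object is semisimple if every monomorphism into it splits
(equivalently, in a finite length abelian category, it is a direct sum of simple objects). -/
def SemisimpleObject {C : Type u₂} [Category.{w} C] (Y : C) : Prop :=
  ∀ ⦃Z : C⦄ (f : Z ⟶ Y), Mono f → ∃ g : Y ⟶ Z, f ≫ g = 𝟙 Z

/-- A semisimple category: every object is semisimple. -/
class SemisimpleCategory (C : Type u₂) [Category.{w} C] : Prop where
  semisimple : ∀ Y : C, SemisimpleObject Y

/-- A `k`-linear category with finite dimensional Hom-spaces. -/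
class HomFinite (k : Type w) (C : Type u₂) [Field k] [Category.{v} C] [Preadditive C]
    [CategoryTheory.Linear k C] : Prop where
  finiteDimensional : ∀ X Y : C, FiniteDimensional k (X ⟶ Y)

section Series

variable {C : Type u₂} [Category.{w} C] [Abelian C]

/-- A composition series of an object of an abelian category: a finite monotone chain of
subobjects from `⊥` to `⊤` all of whose successive quotients are simple. -/
structure CompSeries (Y : C) where
  n : ℕ
  s : Fin (n + 1) → Subobject Y
  mono : Monotone s
  bot_eq : s 0 = ⊥
  top_eq : s (Fin.last n) = ⊤
  simple : ∀ i : Fin n,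
    Simple (cokernel (Subobject.ofLE (s i.castSucc) (s i.succ)
      (mono (Fin.castSucc_le_succ i))))

/-- The `i`-th composition factor of a composition series. -/
noncomputable def CompSeries.factor {Y : C} (cs : CompSeries Y) (i : Fin cs.n) : C :=
  cokernel (Subobject.ofLE (cs.s i.castSucc) (cs.s i.succ) (cs.mono (Fin.castSucc_le_succ i)))

/-- `ℓ_S(Y)`: the number of composition factors of the series isomorphic to `S`. -/
noncomputable def CompSeries.mult {Y : C} (cs : CompSeries Y) (S : C) : ℕ :=
  Nat.card { i : Fin cs.n // Nonempty (cs.factor i ≅ S) }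

/-- All objects have finite length. -/
class FiniteLength (C : Type u₂) [Category.{w} C] [Abelian C] : Prop where
  finiteLength : ∀ Y : C, Nonempty (CompSeries Y)

/-- `f : Q ⟶ N` is an essential epimorphism if it is an epimorphism and no proper
subobject of `Q` maps epimorphically onto `N`. -/
def IsEssentialEpi {Q N : C} (f : Q ⟶ N) : Prop :=
  Epi f ∧ ∀ A : Subobject Q, A ≠ ⊤ → ¬ Epi (A.arrow ≫ f)

/-- `G` is a set of generators (over `k`): every object is a subquotient of a finite
direct sum of objects of `G`. -/
def IsGeneratingSet (G : Set C) : Prop :=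
  haveI : HasFiniteBiproducts C := Abelian.hasFiniteBiproducts
  ∀ Y : C, ∃ (n : ℕ) (g : Fin n → C) (_ : ∀ i, g i ∈ G)
    (A : Subobject (⨁ g)) (q : (A : C) ⟶ Y), Epi q

end Series

section ModulePred

variable {P : Type u} [Category.{v} P] [MonoidalCategory P] [Preadditive P]
variable {M : Type u₂} [Category.{v} M]

/-- The functor `X ↦ Hom_M(X ⊗ M₁, M₂)`; its representing ind-object of `P` is the
internal hom of `M₁,M₂`. -/
@[simps]
def internalHomFunctor (aM : ModuleCategoryStruct P M) (M₁ M₂ : M) : Pᵒᵖ ⥤ Type v where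
  obj X := ((aM.act.obj X.unop).obj M₁ ⟶ M₂)
  map f := TypeCat.ofHom fun g => (aM.act.map f.unop).app M₁ ≫ g
  map_id X := by ext g; simp
  map_comp f g := by ext h; simp

variable [Abelian M]

/-- A module category is locally finite over `P` if all internal homs are (representable by)
objects of `P` and every object has finite length. -/
def LocallyFiniteOver (aM : ModuleCategoryStruct P M) : Prop :=
  (∀ M₁ M₂ : M, (internalHomFunctor aM M₁ M₂).IsRepresentable) ∧
    (∀ m : M, Nonempty (CompSeries m))

/-- A module category is finitely generated over `P` if there is an object `G` such that
every object is a subquotient of `X ⊗ G` for some `X : P`. -/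
def FinitelyGeneratedOver (aM : ModuleCategoryStruct P M) : Prop :=
  ∃ G : M, ∀ Y : M, ∃ (X : P) (A : Subobject (aM.actObj X G)) (q : (A : M) ⟶ Y), Epi q

/-- The Chevalley property: `X ⊗ m` is semisimple whenever `X` and `m` are simple. -/
def ChevalleyProperty (aM : ModuleCategoryStruct P M) : Prop :=
  ∀ (X : P) (m : M), Simple X → Simple m → SemisimpleObject (aM.actObj X m)

end ModulePred

/-! ### Auxiliary material for the proof -/

section AuxSubquot

variable {C : Type u₂} [Category.{w} C] [Abelian C]

/-- `T` occurs as a subquotient of `Y`. -/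
def IsSubquot (T Y : C) : Prop :=
  ∃ (Z : C) (i : Z ⟶ Y) (p : Z ⟶ T), Mono i ∧ Epi p

lemma IsSubquot.of_iso {T Y Y' : C} (h : IsSubquot T Y) (e : Y ≅ Y') : IsSubquot T Y' := by
  obtain ⟨Z, i, p, hi, hp⟩ := h
  haveI := hi
  exact ⟨Z, i ≫ e.hom, p, mono_comp _ _, hp⟩

lemma epi_to_simple_ne_zero {T Z : C} (hT : Simple T) {p : Z ⟶ T} (hp : Epi p) : p ≠ 0 := by
  haveI := hT; haveI := hp
  intro h0
  apply id_nonzero T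
  rw [← cancel_epi p, h0]
  simp

lemma not_isSubquot_of_isZero {T Y : C} (hT : Simple T) (hY : IsZero Y) :
    ¬ IsSubquot T Y := by
  rintro ⟨Z, i, p, hi, hp⟩
  haveI := hi
  have hZ : (𝟙 Z) = 0 := by
    rw [← cancel_mono i]
    exact hY.eq_of_tgt _ _
  refine epi_to_simple_ne_zero hT hp ?_
  rw [← Category.id_comp p, hZ, zero_comp]

lemma isSubquot_cases {T W Y : C} (hT : Simple T) (g : W ⟶ Y) (h : IsSubquot T Y) :
    IsSubquot T W ∨ IsSubquot T (cokernel g) := by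
  haveI := hT
  obtain ⟨Z, i, p, hi, hp⟩ := h
  haveI := hi; haveI := hp
  by_cases h0 : kernel.ι (i ≫ cokernel.π g) ≫ p = 0
  · right
    haveI he : Epi (cokernel.π (kernel.ι (i ≫ cokernel.π g)) ≫
        cokernel.desc (kernel.ι (i ≫ cokernel.π g)) p h0) := by
      rw [cokernel.π_desc]; infer_instance
    exact ⟨Abelian.coimage (i ≫ cokernel.π g), Abelian.factorThruCoimage (i ≫ cokernel.π g),
      cokernel.desc _ p h0, inferInstance, epi_of_epi (cokernel.π _) _⟩
  · left
    haveI hq : Epi (kernel.ι (i ≫ cokernel.π g) ≫ p) := epi_of_nonzero_to_simple h0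
    have hker : (kernel.ι (i ≫ cokernel.π g) ≫ i) ≫ cokernel.π g = 0 := by
      rw [Category.assoc, kernel.condition]
    haveI hmono1 : Mono (kernel.ι (i ≫ cokernel.π g) ≫ i) := mono_comp _ _
    haveI : Mono (kernel.lift (cokernel.π g) (kernel.ι (i ≫ cokernel.π g) ≫ i) hker) :=
      mono_of_mono_fac (kernel.lift_ι _ _ _)
    refine ⟨pullback (Abelian.factorThruImage g)
        (kernel.lift (cokernel.π g) (kernel.ι (i ≫ cokernel.π g) ≫ i) hker),
      pullback.fst _ _, pullback.snd _ _ ≫ kernel.ι (i ≫ cokernel.π g) ≫ p,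
      inferInstance, ?_⟩
    haveI : Epi (pullback.snd (Abelian.factorThruImage g)
        (kernel.lift (cokernel.π g) (kernel.ι (i ≫ cokernel.π g) ≫ i) hker)) :=
      inferInstance
    exact epi_comp _ _

end AuxSubquot

namespace ModuleCategoryStruct

variable {P : Type u} [Category.{v} P] [MonoidalCategory P]
variable {M : Type u₂} [Category.{v} M]
variable (aM : ModuleCategoryStruct P M)

lemma act_unit_injective {m m' : M} {f g : m ⟶ m'}
    (h : (aM.act.obj (𝟙_ P)).map f = (aM.act.obj (𝟙_ P)).map g) : f = g := by
  have hf := aM.unitIso.hom.naturality f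
  have hg := aM.unitIso.hom.naturality g
  simp only [Functor.id_map] at hf hg
  calc f = (aM.unitIso.inv.app m ≫ aM.unitIso.hom.app m) ≫ f := by simp
    _ = aM.unitIso.inv.app m ≫ (aM.act.obj (𝟙_ P)).map f ≫ aM.unitIso.hom.app m' := by
        rw [Category.assoc, hf]
    _ = aM.unitIso.inv.app m ≫ (aM.act.obj (𝟙_ P)).map g ≫ aM.unitIso.hom.app m' := by rw [h]
    _ = (aM.unitIso.inv.app m ≫ aM.unitIso.hom.app m) ≫ g := by rw [hg, Category.assoc]
    _ = g := by simp

lemma assoc_natural_right (X : P) {Y Y' : P} (g : Y ⟶ Y') (m : M) :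
    (aM.act.map (X ◁ g)).app m ≫ (aM.assocIso X Y').hom.app m =
      (aM.assocIso X Y).hom.app m ≫ (aM.act.obj X).map ((aM.act.map g).app m) := by
  simpa using aM.assoc_natural (𝟙 X) g m

lemma assoc_natural_left {X X' : P} (f : X ⟶ X') (Y : P) (m : M) :
    (aM.act.map (f ▷ Y)).app m ≫ (aM.assocIso X' Y).hom.app m =
      (aM.assocIso X Y).hom.app m ≫ (aM.act.map f).app ((aM.act.obj Y).obj m) := by
  simpa using aM.assoc_natural f (𝟙 Y) m

lemma act_leftUnitor (Z : P) (m : M) :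
    (aM.assocIso (𝟙_ P) Z).hom.app m ≫ aM.unitIso.hom.app ((aM.act.obj Z).obj m) =
      (aM.act.map (λ_ Z).hom).app m := by
  apply aM.act_unit_injective
  rw [Functor.map_comp]
  rw [← cancel_epi ((aM.assocIso (𝟙_ P) ((𝟙_ P) ⊗ Z)).hom.app m),
      ← cancel_epi ((aM.act.map (α_ (𝟙_ P) (𝟙_ P) Z).hom).app m)]
  rw [← reassoc_of% (aM.pentagon (𝟙_ P) (𝟙_ P) Z m)]
  rw [aM.triangle (𝟙_ P) ((aM.act.obj Z).obj m)]
  rw [← aM.assoc_natural_left (ρ_ (𝟙_ P)).hom Z m]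
  rw [← aM.assoc_natural_right (𝟙_ P) (λ_ Z).hom m]
  rw [← NatTrans.comp_app_assoc, ← Functor.map_comp, MonoidalCategory.triangle]

noncomputable def actAdj (X Y : P) [ExactPairing X Y] :
    aM.act.obj Y ⊣ aM.act.obj X where
  unit := aM.unitIso.inv ≫ aM.act.map (ExactPairing.coevaluation X Y) ≫ (aM.assocIso X Y).hom
  counit := (aM.assocIso Y X).inv ≫ aM.act.map (ExactPairing.evaluation X Y) ≫ aM.unitIso.hom
  left_triangle_components m := by
    simp only [NatTrans.comp_app, Functor.comp_obj, Functor.id_obj, Functor.map_comp,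
      Category.assoc]
    have hL : (aM.act.obj Y).map ((aM.assocIso X Y).hom.app m) ≫
        (aM.assocIso Y X).inv.app ((aM.act.obj Y).obj m) =
        (aM.assocIso Y (X ⊗ Y)).inv.app m ≫ (aM.act.map (α_ Y X Y).inv).app m ≫
          (aM.assocIso (Y ⊗ X) Y).hom.app m := by
      rw [← cancel_mono ((aM.assocIso Y X).hom.app ((aM.act.obj Y).obj m))]
      simp only [Category.assoc, Iso.inv_hom_id_app, Category.comp_id]
      rw [aM.pentagon Y X Y m]
      simp
    rw [reassoc_of% hL]
    have hB : (aM.act.obj Y).map ((aM.act.map (ExactPairing.coevaluation X Y)).app m) ≫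
        (aM.assocIso Y (X ⊗ Y)).inv.app m =
        (aM.assocIso Y (𝟙_ P)).inv.app m ≫
          (aM.act.map (Y ◁ ExactPairing.coevaluation X Y)).app m := by
      rw [← cancel_mono ((aM.assocIso Y (X ⊗ Y)).hom.app m)]
      simp only [Category.assoc, Iso.inv_hom_id_app, Category.comp_id]
      rw [aM.assoc_natural_right Y (ExactPairing.coevaluation X Y) m]
      simp [Iso.inv_hom_id_app_assoc]
    rw [reassoc_of% hB]
    have hC : (aM.assocIso (Y ⊗ X) Y).hom.app m ≫
        (aM.act.map (ExactPairing.evaluation X Y)).app ((aM.act.obj Y).obj m) =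
        (aM.act.map (ExactPairing.evaluation X Y ▷ Y)).app m ≫
          (aM.assocIso (𝟙_ P) Y).hom.app m :=
      (aM.assoc_natural_left (ExactPairing.evaluation X Y) Y m).symm
    rw [reassoc_of% hC]
    have hmid : (aM.act.map (Y ◁ ExactPairing.coevaluation X Y)).app m ≫
        (aM.act.map (α_ Y X Y).inv).app m ≫
          (aM.act.map (ExactPairing.evaluation X Y ▷ Y)).app m =
        (aM.act.map (ρ_ Y).hom).app m ≫ (aM.act.map (λ_ Y).inv).app m := by
      rw [← NatTrans.comp_app, ← CategoryTheory.Functor.map_comp, ← NatTrans.comp_app,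
        ← CategoryTheory.Functor.map_comp, ExactPairing.coevaluation_evaluation,
        CategoryTheory.Functor.map_comp, NatTrans.comp_app]
    rw [reassoc_of% hmid]
    rw [aM.act_leftUnitor Y m]
    rw [Iso.map_inv_hom_id_app (λ_ Y) aM.act, Category.comp_id]
    have htail : (aM.assocIso Y (𝟙_ P)).inv.app m ≫ (aM.act.map (ρ_ Y).hom).app m =
        (aM.act.obj Y).map (aM.unitIso.hom.app m) := by
      rw [← aM.triangle Y m, Iso.inv_hom_id_app_assoc]
    rw [htail, ← CategoryTheory.Functor.map_comp, Iso.inv_hom_id_app]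
    simp
  right_triangle_components m := by
    simp only [NatTrans.comp_app, Functor.comp_obj, Functor.id_obj, Functor.map_comp,
      Category.assoc]
    have hL : (aM.assocIso X Y).hom.app ((aM.act.obj X).obj m) ≫
        (aM.act.obj X).map ((aM.assocIso Y X).inv.app m) =
        (aM.assocIso (X ⊗ Y) X).inv.app m ≫ (aM.act.map (α_ X Y X).hom).app m ≫
          (aM.assocIso X (Y ⊗ X)).hom.app m := by
      rw [← cancel_epi ((aM.assocIso (X ⊗ Y) X).hom.app m)]
      rw [reassoc_of% (aM.pentagon X Y X m)]
      simp only [Category.assoc, Iso.hom_inv_id_app_assoc]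
      rw [← CategoryTheory.Functor.map_comp, Iso.hom_inv_id_app,
        CategoryTheory.Functor.map_id]
      simp
    rw [reassoc_of% hL]
    have hB : (aM.act.map (ExactPairing.coevaluation X Y)).app ((aM.act.obj X).obj m) ≫
        (aM.assocIso (X ⊗ Y) X).inv.app m =
        (aM.assocIso (𝟙_ P) X).inv.app m ≫
          (aM.act.map (ExactPairing.coevaluation X Y ▷ X)).app m := by
      rw [← cancel_mono ((aM.assocIso (X ⊗ Y) X).hom.app m)]
      simp only [Category.assoc, Iso.inv_hom_id_app, Category.comp_id]
      rw [aM.assoc_natural_left (ExactPairing.coevaluation X Y) X m]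
      simp [Iso.inv_hom_id_app_assoc]
    rw [reassoc_of% hB]
    have hC : (aM.assocIso X (Y ⊗ X)).hom.app m ≫
        (aM.act.obj X).map ((aM.act.map (ExactPairing.evaluation X Y)).app m) =
        (aM.act.map (X ◁ ExactPairing.evaluation X Y)).app m ≫
          (aM.assocIso X (𝟙_ P)).hom.app m :=
      (aM.assoc_natural_right X (ExactPairing.evaluation X Y) m).symm
    rw [reassoc_of% hC]
    have hmid : (aM.act.map (ExactPairing.coevaluation X Y ▷ X)).app m ≫
        (aM.act.map (α_ X Y X).hom).app m ≫
          (aM.act.map (X ◁ ExactPairing.evaluation X Y)).app m =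
        (aM.act.map (λ_ X).hom).app m ≫ (aM.act.map (ρ_ X).inv).app m := by
      rw [← NatTrans.comp_app, ← CategoryTheory.Functor.map_comp, ← NatTrans.comp_app,
        ← CategoryTheory.Functor.map_comp, ExactPairing.evaluation_coevaluation,
        CategoryTheory.Functor.map_comp, NatTrans.comp_app]
    rw [reassoc_of% hmid]
    rw [aM.triangle X m]
    rw [Iso.map_inv_hom_id_app (ρ_ X) aM.act, Category.comp_id]
    have htail : (aM.assocIso (𝟙_ P) X).inv.app m ≫ (aM.act.map (λ_ X).hom).app m =
        aM.unitIso.hom.app ((aM.act.obj X).obj m) := by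
      rw [← aM.act_leftUnitor X m, Iso.inv_hom_id_app_assoc]
    rw [htail, Iso.inv_hom_id_app]
    rfl

end ModuleCategoryStruct

section AuxFactor

variable {P : Type u} [Category.{v} P] [MonoidalCategory P]
variable {M : Type u₂} [Category.{v} M] [Abelian M]

lemma exists_isSubquot_factor (aM : ModuleCategoryStruct P M)
    [∀ X : P, (aM.act.obj X).Additive]
    {T : M} (hT : Simple T) (A : P) [HasLeftDual A] {S : M} (csS : CompSeries S)
    (h : IsSubquot T ((aM.act.obj A).obj S)) :
    ∃ j : Fin csS.n, IsSubquot T ((aM.act.obj A).obj (csS.factor j)) := by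
  haveI : PreservesColimitsOfSize.{0, 0} (aM.act.obj A) :=
    (aM.actAdj (ᘁA) A).leftAdjoint_preservesColimits
  have key : ∀ i : Fin (csS.n + 1),
      IsSubquot T ((aM.act.obj A).obj ((csS.s i : Subobject S) : M)) →
      ∃ j : Fin csS.n, IsSubquot T ((aM.act.obj A).obj (csS.factor j)) := by
    intro i
    induction i using Fin.induction with
    | zero =>
      intro h0
      exfalso
      refine not_isSubquot_of_isZero hT ?_ h0
      have hz : IsZero ((csS.s 0 : Subobject S) : M) := by
        rw [csS.bot_eq]
        exact IsZero.of_iso (isZero_zero M) Subobject.botCoeIsoZero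
      exact (aM.act.obj A).map_isZero hz
    | succ i ih =>
      intro h1
      rcases isSubquot_cases hT
          ((aM.act.obj A).map (Subobject.ofLE _ _ (csS.mono (Fin.castSucc_le_succ i)))) h1 with
        h2 | h2
      · exact ih h2
      · exact ⟨i, h2.of_iso (PreservesCokernel.iso (aM.act.obj A)
          (Subobject.ofLE _ _ (csS.mono (Fin.castSucc_le_succ i)))).symm⟩
  apply key (Fin.last csS.n)
  refine h.of_iso ((aM.act.obj A).mapIso ?_)
  have e : ((csS.s (Fin.last csS.n) : Subobject S) : M) ≅ S := by
    rw [csS.top_eq]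
    exact asIso (Subobject.arrow ⊤)
  exact e.symm

end AuxFactor

section AuxP

variable {k : Type w} [Field k]
variable {P : Type u} [Category.{v} P] [Abelian P] [CategoryTheory.Linear k P]

lemma card_le_finrank_of_noniso (H : P) [FiniteDimensional k (H ⟶ H)]
    {r : ℕ} (A : Fin r → P) (hs : ∀ i, Simple (A i))
    (hni : ∀ i j : Fin r, i ≠ j → (A i ≅ A j) → False)
    (g : ∀ i, A i ⟶ H) (hg : ∀ i, g i ≠ 0)
    (t : ∀ i, H ⟶ A i) (ht : ∀ i, g i ≫ t i = 𝟙 (A i)) :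
    r ≤ Module.finrank k (H ⟶ H) := by
  have hgt : ∀ i j : Fin r, i ≠ j → g i ≫ t j = 0 := by
    intro i j hij
    by_contra hne
    haveI := hs i; haveI := hs j
    haveI := isIso_of_hom_simple hne
    exact hni i j hij (asIso (g i ≫ t j))
  set e : Fin r → (H ⟶ H) := fun i => t i ≫ g i with he
  have hge : ∀ i, g i ≫ e i = g i := by
    intro i
    rw [he]
    dsimp only
    rw [← Category.assoc, ht i, Category.id_comp]
  have hne : ∀ i, e i ≠ 0 := by
    intro i h0
    apply hg i
    have h1 := hge i
    rw [h0, comp_zero] at h1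
    exact h1.symm
  have hee : ∀ i j : Fin r, e j ≫ e i = if i = j then e j else 0 := by
    intro i j
    by_cases hij : i = j
    · subst hij
      rw [if_pos rfl, he]
      dsimp only
      rw [Category.assoc, ← Category.assoc (g i), ht i, Category.id_comp]
    · rw [if_neg hij, he]
      dsimp only
      rw [Category.assoc, ← Category.assoc (g j), hgt j i (Ne.symm hij), zero_comp, comp_zero]
  have hindep : LinearIndependent k e := by
    rw [Fintype.linearIndependent_iff]
    intro c hc j
    have h1 : e j ≫ (∑ i, c i • e i) = 0 := by rw [hc, comp_zero]
    rw [Preadditive.comp_sum] at h1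
    simp only [Linear.comp_smul, hee] at h1
    rw [Finset.sum_eq_single j (fun i _ hij => by rw [if_neg hij, smul_zero])
      (fun hj => absurd (Finset.mem_univ j) hj)] at h1
    rw [if_pos rfl] at h1
    rcases smul_eq_zero.mp h1 with h | h
    · exact h
    · exact absurd h (hne j)
  simpa using hindep.fintype_card_le_finrank

end AuxP

/-- **(First step in the proof of Theorem 2.14 of the paper.)**
Let `P` be an essentially small `k`-linear semisimple abelian rigid monoidal category with
finite dimensional Hom-spaces, and let `M` be an abelian locally finite module category
over `P` with the Chevalley property.  Then for every object `S` of `M` and every simple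
object `T` of `M` there are only finitely many isomorphism classes of simple objects
`A` of `P` such that `ℓ_T(A ⊗ S) > 0`. -/
theorem finitely_many_simples_acting_nontrivially
    {k : Type w} [Field k]
    {P : Type u} [Category.{v} P] [MonoidalCategory P] [Abelian P]
    [CategoryTheory.Linear k P] [MonoidalPreadditive P] [MonoidalLinear k P]
    [RigidCategory P] [SemisimpleCategory P] [HomFinite k P] [EssentiallySmall.{v} P]
    {M : Type u₂} [Category.{v} M] [Abelian M] [CategoryTheory.Linear k M]
    (aM : ModuleCategoryStruct P M)
    [∀ X : P, (aM.act.obj X).Additive] [∀ X : P, (aM.act.obj X).Linear k]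
    (hlf : LocallyFiniteOver aM)
    (hch : ChevalleyProperty aM)
    (S T : M) (hT : Simple T) :
    ∃ (n : ℕ) (rep : Fin n → P),
      ∀ A : P, Simple A →
        (∃ cs : CompSeries (aM.actObj A S), 0 < cs.mult T) →
        ∃ i : Fin n, Nonempty (A ≅ rep i) := by
  classical
  obtain ⟨hrep, hfl⟩ := hlf
  obtain ⟨csS⟩ := hfl S
  have hH : ∀ j : Fin csS.n, ∃ Hj : P,
      Nonempty ((internalHomFunctor aM (csS.factor j) T).RepresentableBy Hj) := fun j =>
    (hrep (csS.factor j) T).has_representation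
  choose Hobj hHobj using hH
  haveI : HasFiniteBiproducts P := Abelian.hasFiniteBiproducts
  let Hbig : P := ⨁ Hobj
  let Good : Set P := {A | Simple A ∧ ∃ g : A ⟶ Hbig, g ≠ 0}
  letI st : Setoid {A : P // A ∈ Good} :=
    ⟨fun A B => Nonempty (A.1 ≅ B.1),
      ⟨fun A => ⟨Iso.refl _⟩, fun ⟨e⟩ => ⟨e.symm⟩, fun ⟨e⟩ ⟨f⟩ => ⟨e.trans f⟩⟩⟩
  haveI : Finite (Quotient st) := by
    by_contra hfin
    rw [not_finite_iff_infinite] at hfin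
    haveI := HomFinite.finiteDimensional (k := k) Hbig Hbig
    set D := Module.finrank k (Hbig ⟶ Hbig) with hD
    let emb : Fin (D + 1) ↪ Quotient st :=
      (Fin.valEmbedding).trans (Infinite.natEmbedding _)
    let Asub : Fin (D + 1) → {A : P // A ∈ Good} := fun i => (emb i).out
    have hout : ∀ i, ⟦Asub i⟧ = emb i := fun i => Quotient.out_eq _
    have hsimple : ∀ i, Simple (Asub i).1 := fun i => (Asub i).2.1
    have hnz : ∀ i, ∃ g : (Asub i).1 ⟶ Hbig, g ≠ 0 := fun i => (Asub i).2.2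
    choose g hgne using hnz
    have hmono : ∀ i, Mono (g i) := fun i => by
      haveI := hsimple i
      exact mono_of_nonzero_from_simple (hgne i)
    have hsplit : ∀ i, ∃ t : Hbig ⟶ (Asub i).1, g i ≫ t = 𝟙 (Asub i).1 := fun i =>
      SemisimpleCategory.semisimple Hbig (g i) (hmono i)
    choose t ht using hsplit
    have hni : ∀ i j : Fin (D + 1), i ≠ j → ((Asub i).1 ≅ (Asub j).1) → False := by
      intro i j hij e
      apply hij
      apply emb.injective
      rw [← hout i, ← hout j]
      exact Quotient.sound ⟨e⟩
    have hcard := card_le_finrank_of_noniso (k := k) Hbig (fun i => (Asub i).1)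
      hsimple hni g hgne t ht
    rw [← hD] at hcard
    omega
  obtain ⟨n, ⟨eqv⟩⟩ := Finite.exists_equiv_fin (Quotient st)
  refine ⟨n, fun i => ((eqv.symm i).out).1, ?_⟩
  intro A hA hcs
  haveI := hA
  have hGood : A ∈ Good := by
    refine ⟨hA, ?_⟩
    obtain ⟨cs, hmult⟩ := hcs
    have hidx : Nonempty {i : Fin cs.n // Nonempty (cs.factor i ≅ T)} := by
      by_contra hne
      rw [not_nonempty_iff] at hne
      rw [CompSeries.mult, Nat.card_of_isEmpty] at hmult
      exact Nat.lt_irrefl 0 hmult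
    obtain ⟨⟨i, ⟨eiso⟩⟩⟩ := hidx
    have hsq : IsSubquot T (aM.actObj A S) := by
      haveI : Epi (cokernel.π (Subobject.ofLE _ _ (cs.mono (Fin.castSucc_le_succ i))) ≫
          eiso.hom) := epi_comp' inferInstance (@IsIso.epi_of_iso _ _ _ _ eiso.hom (Iso.isIso_hom eiso))
      exact ⟨((cs.s i.succ : Subobject (aM.actObj A S)) : M), Subobject.arrow _,
        cokernel.π (Subobject.ofLE _ _ (cs.mono (Fin.castSucc_le_succ i))) ≫ eiso.hom,
        inferInstance, inferInstance⟩
    obtain ⟨j, hj⟩ := exists_isSubquot_factor aM hT A csS hsq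
    -- Chevalley property gives a nonzero map `A ⊗ factor j ⟶ T`
    obtain ⟨Z, iZ, pZ, hiZ, hpZ⟩ := hj
    obtain ⟨tZ, htZ⟩ := hch A (csS.factor j) hA (csS.simple j) iZ hiZ
    have hfne : (tZ ≫ pZ : (aM.act.obj A).obj (csS.factor j) ⟶ T) ≠ 0 := by
      intro h0
      refine epi_to_simple_ne_zero hT hpZ ?_
      have h1 : iZ ≫ tZ ≫ pZ = pZ := by rw [← Category.assoc, htZ, Category.id_comp]
      rw [h0, comp_zero] at h1
      exact h1.symm
    have hgj : ∃ gj : A ⟶ Hobj j, gj ≠ 0 := by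
      by_contra hg0
      push_neg at hg0
      haveI : Subsingleton (A ⟶ Hobj j) := ⟨fun a b => by rw [hg0 a, hg0 b]⟩
      haveI : Subsingleton ((aM.act.obj A).obj (csS.factor j) ⟶ T) :=
        Equiv.subsingleton
          (((hHobj j).some.homEquiv (X := A)).symm :
            (internalHomFunctor aM (csS.factor j) T).obj (Opposite.op A) ≃ (A ⟶ Hobj j))
      exact hfne (Subsingleton.elim _ _)
    obtain ⟨gj, hgjne⟩ := hgj
    refine ⟨gj ≫ biproduct.ι Hobj j, ?_⟩
    intro h0
    apply hgjne
    have h1 : gj ≫ biproduct.ι Hobj j ≫ biproduct.π Hobj j = 0 := by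
      rw [← Category.assoc, h0, zero_comp]
    rwa [biproduct.ι_π_self, Category.comp_id] at h1
  refine ⟨eqv (Quotient.mk st ⟨A, hGood⟩), ?_⟩
  simp only [Equiv.symm_apply_apply]
  obtain ⟨eiso⟩ := Quotient.mk_out (s := st) (⟨A, hGood⟩ : {A : P // A ∈ Good})
  exact ⟨eiso.symm⟩

end Tannaka
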